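/- The right triangle with legs 1 and 2 (and hypotenuse √5) can be partitioned into 5 triangles, each congruent to the triangle scaled by a factor of 1/√5 (i.e., each similar to the original with ratio 1/√5 and of equal area 1/5 of the original). -/

import Mathlib

open Complex
open scoped Pointwise

/-- The 1, 2, √5 right triangle with vertices `0`, `2`, `i` in the plane `ℂ`. -/
noncomputable def pinwheelTriangle : Set ℂ :=
  convexHull ℝ {(0 : ℂ), 2, I}

lemma tri_mem (p q r z : ℂ)
    (hd : 0 < (q-p).re*(r-p).im - (q-p).im*(r-p).re)
    (h1 : 0 ≤ (q-p).re*(z-p).im - (q-p).im*(z-p).re)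
    (h2 : 0 ≤ (r-q).re*(z-q).im - (r-q).im*(z-q).re)
    (h3 : 0 ≤ (p-r).re*(z-r).im - (p-r).im*(z-r).re) :
    z ∈ convexHull ℝ {p, q, r} := by
  simp only [Complex.sub_re, Complex.sub_im] at hd h1 h2 h3
  set d := (q.re - p.re)*(r.im - p.im) - (q.im - p.im)*(r.re - p.re) with hdrw
  have hdne : d ≠ 0 := ne_of_gt hd
  set α := ((r.re - q.re)*(z.im - q.im) - (r.im - q.im)*(z.re - q.re)) / d with hα
  set β := ((p.re - r.re)*(z.im - r.im) - (p.im - r.im)*(z.re - r.re)) / d with hβ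
  set γ := ((q.re - p.re)*(z.im - p.im) - (q.im - p.im)*(z.re - p.re)) / d with hγ
  have hsum : α + β + γ = 1 := by
    rw [hα, hβ, hγ]; field_simp; ring
  have hcomb : α • p + β • q + γ • r = z := by
    apply Complex.ext <;>
      simp only [Complex.add_re, Complex.add_im, Complex.smul_re, Complex.smul_im,
        hα, hβ, hγ, smul_eq_mul] <;> field_simp <;> rw [hdrw] <;> ring
  have hw0 : ∀ i ∈ (Finset.univ : Finset (Fin 3)), 0 ≤ ![α, β, γ] i := by
    intro i _
    fin_cases i
    · exact div_nonneg h2 hd.le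
    · exact div_nonneg h3 hd.le
    · exact div_nonneg h1 hd.le
  have hws : 0 < ∑ i : Fin 3, ![α, β, γ] i := by
    simp [Fin.sum_univ_three, hsum]
  have hz : ∀ i ∈ (Finset.univ : Finset (Fin 3)), ![p, q, r] i ∈ ({p, q, r} : Set ℂ) := by
    intro i _; fin_cases i <;> simp
  have := Finset.centerMass_mem_convexHull (Finset.univ : Finset (Fin 3)) hw0 hws hz
  rw [Finset.centerMass, Fin.sum_univ_three, Fin.sum_univ_three] at this
  rw [← hcomb]; simpa [hsum, Complex.real_smul] using this

lemma lin_ab (a b : ℝ) : IsLinearMap ℝ (fun z : ℂ => a*z.re + b*z.im) := by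
  constructor
  · intro x y; simp [Complex.add_re, Complex.add_im]; ring
  · intro c x; simp [Complex.smul_re, Complex.smul_im]; ring

lemma hull_le {a b c : ℝ} {s : Set ℂ} (h : ∀ z ∈ s, a*z.re + b*z.im ≤ c) :
    convexHull ℝ s ⊆ {z : ℂ | a*z.re + b*z.im ≤ c} :=
  convexHull_min h (convex_halfSpace_le (lin_ab a b) c)

lemma hull_ge {a b c : ℝ} {s : Set ℂ} (h : ∀ z ∈ s, c ≤ a*z.re + b*z.im) :
    convexHull ℝ s ⊆ {z : ℂ | c ≤ a*z.re + b*z.im} :=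
  convexHull_min h (convex_halfSpace_ge (lin_ab a b) c)

lemma disj_sep {S1 S2 : Set ℂ} (a b c : ℝ) (hab : a ≠ 0 ∨ b ≠ 0)
    (h1 : S1 ⊆ {z : ℂ | a*z.re + b*z.im ≤ c})
    (h2 : S2 ⊆ {z : ℂ | c ≤ a*z.re + b*z.im}) :
    Disjoint (interior S1) (interior S2) := by
  rw [Set.disjoint_left]
  intro z hz1 hz2
  have hle : a*z.re + b*z.im ≤ c := h1 (interior_subset hz1)
  have hge : c ≤ a*z.re + b*z.im := h2 (interior_subset hz2)
  have heq : a*z.re + b*z.im = c := le_antisymm hle hge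
  obtain ⟨ε, hε, hball⟩ := Metric.isOpen_iff.1 isOpen_interior z hz1
  have hn2 : 0 < a^2 + b^2 := by
    rcases hab with h | h <;> positivity
  have hne : (⟨a, b⟩ : ℂ) ≠ 0 := by
    simp only [ne_eq, Complex.ext_iff, Complex.zero_re, Complex.zero_im, not_and]
    tauto
  have hn : (0:ℝ) < ‖(⟨a, b⟩ : ℂ)‖ := norm_pos_iff.mpr hne
  set δ := ε / (2 * ‖(⟨a, b⟩ : ℂ)‖) with hδ
  have hδpos : 0 < δ := by positivity
  have hmem : z + δ • (⟨a, b⟩ : ℂ) ∈ Metric.ball z ε := by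
    rw [Metric.mem_ball, dist_eq_norm]
    have : z + δ • (⟨a, b⟩ : ℂ) - z = δ • (⟨a, b⟩ : ℂ) := add_sub_cancel_left z _
    rw [this, norm_smul]
    simp only [Real.norm_eq_abs, abs_of_pos hδpos, abs_of_pos (div_pos hε (by positivity : (0:ℝ) < 2 * ‖(⟨a, b⟩ : ℂ)‖)), hδ]
    rw [div_mul_eq_mul_div, mul_comm]
    rw [div_lt_iff₀ (by positivity)]
    nlinarith
  have := h1 (interior_subset (hball hmem))
  simp only [Set.mem_setOf_eq] at this
  have hre : (z + δ • (⟨a, b⟩ : ℂ)).re = z.re + δ * a := by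
    simp [Complex.add_re, Complex.smul_re]
  have him : (z + δ • (⟨a, b⟩ : ℂ)).im = z.im + δ * b := by
    simp [Complex.add_im, Complex.smul_im]
  rw [hre, him] at this
  nlinarith

/-- affine map z ↦ a * conj z + b -/
noncomputable def conjAff (a b : ℂ) : ℂ →ᵃ[ℝ] ℂ where
  toFun z := a * (starRingEnd ℂ) z + b
  linear :=
    { toFun := fun z => a * (starRingEnd ℂ) z
      map_add' := by intro x y; simp [map_add]; ring
      map_smul' := by
        intro c x
        simp [Complex.real_smul, map_mul, Complex.conj_ofReal]
        ring }
  map_vadd' := by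
    intro p v
    simp [map_add]
    ring

@[simp] lemma conjAff_apply (a b z : ℂ) : conjAff a b z = a * (starRingEnd ℂ) z + b := rfl

lemma conjAff_isometry (a b : ℂ) (ha : ‖a‖ = 1) :
    Isometry (fun z => a * (starRingEnd ℂ) z + b) := by
  apply Isometry.of_dist_eq
  intro x y
  simp only [Complex.dist_eq]
  have : a * (starRingEnd ℂ) x + b - (a * (starRingEnd ℂ) y + b)
      = a * (starRingEnd ℂ) (x - y) := by rw [map_sub]; ring
  rw [this, norm_mul, ha, Complex.norm_conj, one_mul]

lemma abs_mk_sqrt5 (x y : ℝ) (h : (x*x + y*y) * 5 = 1) :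
    ‖(⟨x, y⟩ : ℂ) * ((Real.sqrt 5 : ℝ) : ℂ)‖ = 1 := by
  rw [norm_mul, Complex.norm_real, Real.norm_eq_abs, Complex.norm_def, Complex.normSq_mk]
  rw [_root_.abs_of_nonneg (Real.sqrt_nonneg _), ← Real.sqrt_mul (by nlinarith [sq_nonneg x, sq_nonneg y])]
  rw [h, Real.sqrt_one]

lemma img_eq (a b : ℂ) :
    (fun z => a * ((Real.sqrt 5 : ℝ) : ℂ) * (starRingEnd ℂ) z + b) ''
      ((Real.sqrt 5)⁻¹ • pinwheelTriangle)
    = convexHull ℝ {b, a * 2 + b, a * (-I) + b} := by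
  have h5 : (Real.sqrt 5 : ℝ) ≠ 0 := ne_of_gt (Real.sqrt_pos.mpr (by norm_num))
  have key : (fun z => a * ((Real.sqrt 5 : ℝ) : ℂ) * (starRingEnd ℂ) ((Real.sqrt 5)⁻¹ • z) + b)
      = ⇑(conjAff a b) := by
    funext z
    simp only [conjAff_apply, Complex.real_smul, map_mul, map_inv₀, Complex.conj_ofReal,
      Complex.ofReal_inv]
    rw [show a * ((Real.sqrt 5 : ℝ) : ℂ) * (((Real.sqrt 5 : ℝ) : ℂ)⁻¹ * (starRingEnd ℂ) z)
        = a * (((Real.sqrt 5 : ℝ) : ℂ) * ((Real.sqrt 5 : ℝ) : ℂ)⁻¹) * (starRingEnd ℂ) z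
      from by ring]
    rw [mul_inv_cancel₀ (by exact_mod_cast h5)]
    ring_nf
  rw [← Set.image_smul, Set.image_image]
  rw [show (fun z => a * ((Real.sqrt 5 : ℝ) : ℂ)
      * (starRingEnd ℂ) ((Real.sqrt 5)⁻¹ • z) + b) = ⇑(conjAff a b) from key]
  rw [pinwheelTriangle, AffineMap.image_convexHull]
  congr 1
  simp only [Set.image_insert_eq, Set.image_singleton, conjAff_apply, map_zero, mul_zero,
    zero_add, Complex.conj_I]
  norm_num [map_ofNat]

/-- The congruence maps. -/
noncomputable def pw (a b : ℂ) : ℂ → ℂ :=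
  fun z => a * ((Real.sqrt 5 : ℝ) : ℂ) * (starRingEnd ℂ) z + b

lemma pw_img (a b : ℂ) :
    pw a b '' ((Real.sqrt 5)⁻¹ • pinwheelTriangle)
      = convexHull ℝ {b, a * 2 + b, a * (-I) + b} := img_eq a b

lemma pw_isom (x y : ℝ) (b : ℂ) (h : (x*x + y*y) * 5 = 1) : Isometry (pw ⟨x, y⟩ b) :=
  conjAff_isometry _ b (abs_mk_sqrt5 x y h)

lemma himg0 : pw ⟨-1/5,-2/5⟩ ⟨2/5,4/5⟩ '' ((Real.sqrt 5)⁻¹ • pinwheelTriangle)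
    = convexHull ℝ ({⟨2/5,4/5⟩, ⟨0,1⟩, ⟨0,0⟩} : Set ℂ) := by
  rw [pw_img]
  rw [show ((⟨-1/5,-2/5⟩:ℂ) * 2 + ⟨2/5,4/5⟩ : ℂ) = ⟨0,0⟩ by
    apply Complex.ext <;> simp <;> norm_num]
  rw [show ((⟨-1/5,-2/5⟩:ℂ) * (-I) + ⟨2/5,4/5⟩ : ℂ) = ⟨0,1⟩ by
    apply Complex.ext <;> simp <;> norm_num]
  rw [Set.pair_comm]

lemma himg1 : pw ⟨2/5,-1/5⟩ ⟨1/5,2/5⟩ '' ((Real.sqrt 5)⁻¹ • pinwheelTriangle)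
    = convexHull ℝ ({⟨1/5,2/5⟩, ⟨0,0⟩, ⟨1,0⟩} : Set ℂ) := by
  rw [pw_img]
  rw [show ((⟨2/5,-1/5⟩:ℂ) * 2 + ⟨1/5,2/5⟩ : ℂ) = ⟨1,0⟩ by
    apply Complex.ext <;> simp <;> norm_num]
  rw [show ((⟨2/5,-1/5⟩:ℂ) * (-I) + ⟨1/5,2/5⟩ : ℂ) = ⟨0,0⟩ by
    apply Complex.ext <;> simp <;> norm_num]
  rw [Set.pair_comm]

lemma himg2 : pw ⟨2/5,-1/5⟩ ⟨6/5,2/5⟩ '' ((Real.sqrt 5)⁻¹ • pinwheelTriangle)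
    = convexHull ℝ ({⟨6/5,2/5⟩, ⟨1,0⟩, ⟨2,0⟩} : Set ℂ) := by
  rw [pw_img]
  rw [show ((⟨2/5,-1/5⟩:ℂ) * 2 + ⟨6/5,2/5⟩ : ℂ) = ⟨2,0⟩ by
    apply Complex.ext <;> simp <;> norm_num]
  rw [show ((⟨2/5,-1/5⟩:ℂ) * (-I) + ⟨6/5,2/5⟩ : ℂ) = ⟨1,0⟩ by
    apply Complex.ext <;> simp <;> norm_num]
  rw [Set.pair_comm]

lemma himg3 : pw ⟨-2/5,1/5⟩ ⟨1,0⟩ '' ((Real.sqrt 5)⁻¹ • pinwheelTriangle)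
    = convexHull ℝ ({⟨1,0⟩, ⟨6/5,2/5⟩, ⟨1/5,2/5⟩} : Set ℂ) := by
  rw [pw_img]
  rw [show ((⟨-2/5,1/5⟩:ℂ) * 2 + ⟨1,0⟩ : ℂ) = ⟨1/5,2/5⟩ by
    apply Complex.ext <;> simp <;> norm_num]
  rw [show ((⟨-2/5,1/5⟩:ℂ) * (-I) + ⟨1,0⟩ : ℂ) = ⟨6/5,2/5⟩ by
    apply Complex.ext <;> simp <;> norm_num]
  rw [Set.pair_comm]

lemma himg4 : pw ⟨2/5,-1/5⟩ ⟨2/5,4/5⟩ '' ((Real.sqrt 5)⁻¹ • pinwheelTriangle)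
    = convexHull ℝ ({⟨2/5,4/5⟩, ⟨1/5,2/5⟩, ⟨6/5,2/5⟩} : Set ℂ) := by
  rw [pw_img]
  rw [show ((⟨2/5,-1/5⟩:ℂ) * 2 + ⟨2/5,4/5⟩ : ℂ) = ⟨6/5,2/5⟩ by
    apply Complex.ext <;> simp <;> norm_num]
  rw [show ((⟨2/5,-1/5⟩:ℂ) * (-I) + ⟨2/5,4/5⟩ : ℂ) = ⟨1/5,2/5⟩ by
    apply Complex.ext <;> simp <;> norm_num]
  rw [Set.pair_comm]

lemma hull3_le (a b c : ℝ) (p q r : ℂ) (h1 : a*p.re + b*p.im ≤ c)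
    (h2 : a*q.re + b*q.im ≤ c) (h3 : a*r.re + b*r.im ≤ c) :
    convexHull ℝ ({p, q, r} : Set ℂ) ⊆ {z : ℂ | a*z.re + b*z.im ≤ c} := by
  apply hull_le
  intro w hw
  simp only [Set.mem_insert_iff, Set.mem_singleton_iff] at hw
  rcases hw with rfl | rfl | rfl <;> assumption

lemma hull3_ge (a b c : ℝ) (p q r : ℂ) (h1 : c ≤ a*p.re + b*p.im)
    (h2 : c ≤ a*q.re + b*q.im) (h3 : c ≤ a*r.re + b*r.im) :
    convexHull ℝ ({p, q, r} : Set ℂ) ⊆ {z : ℂ | c ≤ a*z.re + b*z.im} := by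
  apply hull_ge
  intro w hw
  simp only [Set.mem_insert_iff, Set.mem_singleton_iff] at hw
  rcases hw with rfl | rfl | rfl <;> assumption

lemma memT (w : ℂ) (hx : 0 ≤ w.re) (hy : 0 ≤ w.im) (hxy : w.re + 2*w.im ≤ 2) :
    w ∈ pinwheelTriangle := by
  rw [pinwheelTriangle]
  refine tri_mem 0 2 I w ?_ ?_ ?_ ?_ <;> simp <;> linarith

lemma T_bounds (z : ℂ) (hz : z ∈ pinwheelTriangle) :
    0 ≤ z.re ∧ 0 ≤ z.im ∧ z.re + 2*z.im ≤ 2 := by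
  rw [pinwheelTriangle] at hz
  have hvert : ∀ (a b c : ℝ), c ≤ a*(0:ℂ).re + b*(0:ℂ).im → c ≤ a*(2:ℂ).re + b*(2:ℂ).im →
      c ≤ a*(I:ℂ).re + b*(I:ℂ).im → c ≤ a*z.re + b*z.im := by
    intro a b c h0 h2 hI
    refine hull_ge ?_ hz
    intro w hw
    simp only [Set.mem_insert_iff, Set.mem_singleton_iff] at hw
    rcases hw with rfl | rfl | rfl <;> assumption
  refine ⟨?_, ?_, ?_⟩
  · have := hvert 1 0 0 (by simp) (by simp) (by simp); linarith
  · have := hvert 0 1 0 (by simp) (by simp) (by simp); linarith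
  · have := hvert (-1) (-2) (-2) (by simp) (by simp) (by simp)
    linarith

lemma memQ1 (z : ℂ) (h1 : 2*z.re ≤ z.im) (h2 : 0 ≤ z.re) (h3 : z.re + 2*z.im ≤ 2) :
    z ∈ convexHull ℝ ({⟨2/5,4/5⟩, ⟨0,1⟩, ⟨0,0⟩} : Set ℂ) := by
  refine tri_mem _ _ _ z ?_ ?_ ?_ ?_ <;> simp <;> linarith

lemma memQ2 (z : ℂ) (h1 : z.im ≤ 2*z.re) (h2 : 0 ≤ z.im) (h3 : z.re + 2*z.im ≤ 1) :
    z ∈ convexHull ℝ ({⟨1/5,2/5⟩, ⟨0,0⟩, ⟨1,0⟩} : Set ℂ) := by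
  refine tri_mem _ _ _ z ?_ ?_ ?_ ?_ <;> simp <;> linarith

lemma memQ3 (z : ℂ) (h1 : 2 ≤ 2*z.re - z.im) (h2 : 0 ≤ z.im) (h3 : z.re + 2*z.im ≤ 2) :
    z ∈ convexHull ℝ ({⟨6/5,2/5⟩, ⟨1,0⟩, ⟨2,0⟩} : Set ℂ) := by
  refine tri_mem _ _ _ z ?_ ?_ ?_ ?_ <;> simp <;> linarith

lemma memQ4 (z : ℂ) (h1 : 2*z.re - z.im ≤ 2) (h2 : z.im ≤ 2/5) (h3 : 1 ≤ z.re + 2*z.im) :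
    z ∈ convexHull ℝ ({⟨1,0⟩, ⟨6/5,2/5⟩, ⟨1/5,2/5⟩} : Set ℂ) := by
  refine tri_mem _ _ _ z ?_ ?_ ?_ ?_ <;> simp <;> linarith

lemma memQ5 (z : ℂ) (h1 : z.im ≤ 2*z.re) (h2 : 2/5 ≤ z.im) (h3 : z.re + 2*z.im ≤ 2) :
    z ∈ convexHull ℝ ({⟨2/5,4/5⟩, ⟨1/5,2/5⟩, ⟨6/5,2/5⟩} : Set ℂ) := by
  refine tri_mem _ _ _ z ?_ ?_ ?_ ?_ <;> simp <;> linarith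

lemma QsubT (p q r : ℂ) (hp : p ∈ pinwheelTriangle) (hq : q ∈ pinwheelTriangle)
    (hr : r ∈ pinwheelTriangle) :
    convexHull ℝ ({p, q, r} : Set ℂ) ⊆ pinwheelTriangle := by
  apply convexHull_min
  · intro w hw
    simp only [Set.mem_insert_iff, Set.mem_singleton_iff] at hw
    rcases hw with rfl | rfl | rfl <;> assumption
  · rw [pinwheelTriangle]; exact convex_convexHull ℝ _

/-- The pinwheel substitution: the right triangle with legs `1` and `2` can be partitioned
into `5` triangles, each congruent (via a plane isometry) to the original triangle scaled
by `1/√5`; the pieces have pairwise disjoint interiors and their union is the triangle. -/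
theorem pinwheel_partition :
    ∃ (f : Fin 5 → (ℂ → ℂ)),
      (∀ i, Isometry (f i)) ∧
      (Set.univ : Set (Fin 5)).Pairwise (fun i j =>
        Disjoint (interior (f i '' ((Real.sqrt 5)⁻¹ • pinwheelTriangle)))
          (interior (f j '' ((Real.sqrt 5)⁻¹ • pinwheelTriangle)))) ∧
      (⋃ i, f i '' ((Real.sqrt 5)⁻¹ • pinwheelTriangle)) = pinwheelTriangle := by
  classical
  set Q1 : Set ℂ := convexHull ℝ ({⟨2/5,4/5⟩, ⟨0,1⟩, ⟨0,0⟩} : Set ℂ) with hQ1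
  set Q2 : Set ℂ := convexHull ℝ ({⟨1/5,2/5⟩, ⟨0,0⟩, ⟨1,0⟩} : Set ℂ) with hQ2
  set Q3 : Set ℂ := convexHull ℝ ({⟨6/5,2/5⟩, ⟨1,0⟩, ⟨2,0⟩} : Set ℂ) with hQ3
  set Q4 : Set ℂ := convexHull ℝ ({⟨1,0⟩, ⟨6/5,2/5⟩, ⟨1/5,2/5⟩} : Set ℂ) with hQ4
  set Q5 : Set ℂ := convexHull ℝ ({⟨2/5,4/5⟩, ⟨1/5,2/5⟩, ⟨6/5,2/5⟩} : Set ℂ) with hQ5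
  -- halfspace bounds
  have b1 : Q1 ⊆ {z : ℂ | 2*z.re + (-1)*z.im ≤ 0} :=
    hull3_le 2 (-1) 0 _ _ _ (by norm_num) (by norm_num) (by norm_num)
  have b2 : Q2 ⊆ {z : ℂ | 0 ≤ 2*z.re + (-1)*z.im} :=
    hull3_ge 2 (-1) 0 _ _ _ (by norm_num) (by norm_num) (by norm_num)
  have b3 : Q3 ⊆ {z : ℂ | 0 ≤ 2*z.re + (-1)*z.im} :=
    hull3_ge 2 (-1) 0 _ _ _ (by norm_num) (by norm_num) (by norm_num)
  have b4 : Q4 ⊆ {z : ℂ | 0 ≤ 2*z.re + (-1)*z.im} :=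
    hull3_ge 2 (-1) 0 _ _ _ (by norm_num) (by norm_num) (by norm_num)
  have b5 : Q5 ⊆ {z : ℂ | 0 ≤ 2*z.re + (-1)*z.im} :=
    hull3_ge 2 (-1) 0 _ _ _ (by norm_num) (by norm_num) (by norm_num)
  have c2 : Q2 ⊆ {z : ℂ | 1*z.re + 2*z.im ≤ 1} :=
    hull3_le 1 2 1 _ _ _ (by norm_num) (by norm_num) (by norm_num)
  have c3 : Q3 ⊆ {z : ℂ | 1 ≤ 1*z.re + 2*z.im} :=
    hull3_ge 1 2 1 _ _ _ (by norm_num) (by norm_num) (by norm_num)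
  have c4 : Q4 ⊆ {z : ℂ | 1 ≤ 1*z.re + 2*z.im} :=
    hull3_ge 1 2 1 _ _ _ (by norm_num) (by norm_num) (by norm_num)
  have c5 : Q5 ⊆ {z : ℂ | 1 ≤ 1*z.re + 2*z.im} :=
    hull3_ge 1 2 1 _ _ _ (by norm_num) (by norm_num) (by norm_num)
  have e3 : Q3 ⊆ {z : ℂ | 2 ≤ 2*z.re + (-1)*z.im} :=
    hull3_ge 2 (-1) 2 _ _ _ (by norm_num) (by norm_num) (by norm_num)
  have e4 : Q4 ⊆ {z : ℂ | 2*z.re + (-1)*z.im ≤ 2} :=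
    hull3_le 2 (-1) 2 _ _ _ (by norm_num) (by norm_num) (by norm_num)
  have e5 : Q5 ⊆ {z : ℂ | 2*z.re + (-1)*z.im ≤ 2} :=
    hull3_le 2 (-1) 2 _ _ _ (by norm_num) (by norm_num) (by norm_num)
  have g4 : Q4 ⊆ {z : ℂ | 0*z.re + 1*z.im ≤ 2/5} :=
    hull3_le 0 1 (2/5) _ _ _ (by norm_num) (by norm_num) (by norm_num)
  have g5 : Q5 ⊆ {z : ℂ | 2/5 ≤ 0*z.re + 1*z.im} :=
    hull3_ge 0 1 (2/5) _ _ _ (by norm_num) (by norm_num) (by norm_num)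
  -- pairwise disjointness of the pieces
  have d12 := disj_sep 2 (-1) 0 (Or.inl two_ne_zero) b1 b2
  have d13 := disj_sep 2 (-1) 0 (Or.inl two_ne_zero) b1 b3
  have d14 := disj_sep 2 (-1) 0 (Or.inl two_ne_zero) b1 b4
  have d15 := disj_sep 2 (-1) 0 (Or.inl two_ne_zero) b1 b5
  have d23 := disj_sep 1 2 1 (Or.inl one_ne_zero) c2 c3
  have d24 := disj_sep 1 2 1 (Or.inl one_ne_zero) c2 c4
  have d25 := disj_sep 1 2 1 (Or.inl one_ne_zero) c2 c5
  have d34 := (disj_sep 2 (-1) 2 (Or.inl two_ne_zero) e4 e3).symm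
  have d35 := (disj_sep 2 (-1) 2 (Or.inl two_ne_zero) e5 e3).symm
  have d45 := disj_sep 0 1 (2/5) (Or.inr one_ne_zero) g4 g5
  refine ⟨![pw ⟨-1/5,-2/5⟩ ⟨2/5,4/5⟩, pw ⟨2/5,-1/5⟩ ⟨1/5,2/5⟩, pw ⟨2/5,-1/5⟩ ⟨6/5,2/5⟩,
      pw ⟨-2/5,1/5⟩ ⟨1,0⟩, pw ⟨2/5,-1/5⟩ ⟨2/5,4/5⟩], ?_, ?_, ?_⟩
  · intro i
    fin_cases i <;>
      simp only [Fin.reduceFinMk, Fin.zero_eta, Fin.mk_one, Fin.isValue, Matrix.cons_val_zero,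
        Matrix.cons_val_one, Matrix.cons_val_two, Matrix.cons_val_three, Matrix.cons_val_four,
        Matrix.head_cons, Matrix.vecHead, Matrix.vecTail, Matrix.cons_val_succ,
        Function.comp_apply] <;>
      [exact pw_isom _ _ _ (by norm_num); exact pw_isom _ _ _ (by norm_num);
       exact pw_isom _ _ _ (by norm_num); exact pw_isom _ _ _ (by norm_num);
       exact pw_isom _ _ _ (by norm_num)]
  · intro i _ j _ hij
    fin_cases i <;> fin_cases j <;>
      simp only [Fin.reduceFinMk, Fin.zero_eta, Fin.mk_one, Fin.isValue, Matrix.cons_val_zero,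
        Matrix.cons_val_one, Matrix.cons_val_two, Matrix.cons_val_three, Matrix.cons_val_four,
        Matrix.head_cons, Matrix.vecHead, Matrix.vecTail, Matrix.cons_val_succ,
        Function.comp_apply, himg0, himg1, himg2, himg3, himg4,
        ← hQ1, ← hQ2, ← hQ3, ← hQ4, ← hQ5] <;>
      first
        | exact absurd rfl hij
        | exact d12 | exact d13 | exact d14 | exact d15
        | exact d23 | exact d24 | exact d25
        | exact d34 | exact d35 | exact d45
        | exact d12.symm | exact d13.symm | exact d14.symm | exact d15.symm
        | exact d23.symm | exact d24.symm | exact d25.symm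
        | exact d34.symm | exact d35.symm | exact d45.symm
  · apply subset_antisymm
    · apply Set.iUnion_subset
      intro i
      fin_cases i <;>
        simp only [Fin.reduceFinMk, Fin.zero_eta, Fin.mk_one, Fin.isValue, Matrix.cons_val_zero,
          Matrix.cons_val_one, Matrix.cons_val_two, Matrix.cons_val_three, Matrix.cons_val_four,
          Matrix.head_cons, Matrix.vecHead, Matrix.vecTail, Matrix.cons_val_succ,
          Function.comp_apply, himg0, himg1, himg2, himg3, himg4] <;>
        exact QsubT _ _ _ (memT _ (by norm_num) (by norm_num) (by norm_num))
          (memT _ (by norm_num) (by norm_num) (by norm_num))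
          (memT _ (by norm_num) (by norm_num) (by norm_num))
    · intro z hz
      obtain ⟨hx, hy, hxy⟩ := T_bounds z hz
      rw [Set.mem_iUnion]
      by_cases h1 : 2*z.re ≤ z.im
      · exact ⟨0, by
          simp only [Matrix.cons_val_zero, himg0]
          exact memQ1 z h1 hx hxy⟩
      push_neg at h1
      by_cases h2 : z.re + 2*z.im ≤ 1
      · exact ⟨1, by
          simp only [Matrix.cons_val_one, Matrix.head_cons, Matrix.cons_val_zero, himg1]
          exact memQ2 z h1.le hy h2⟩
      push_neg at h2
      by_cases h3 : 2 ≤ 2*z.re - z.im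
      · exact ⟨2, by
          simp only [Matrix.cons_val_two, Matrix.vecHead, Matrix.vecTail, Matrix.cons_val_succ,
            Matrix.cons_val_zero, Function.comp_apply, himg2]
          exact memQ3 z h3 hy hxy⟩
      push_neg at h3
      by_cases h4 : z.im ≤ 2/5
      · exact ⟨3, by
          simp only [Matrix.cons_val_three, Matrix.vecHead, Matrix.vecTail, Matrix.cons_val_succ,
            Matrix.cons_val_zero, Function.comp_apply, himg3]
          exact memQ4 z h3.le h4 h2.le⟩
      push_neg at h4
      exact ⟨4, by
        simp only [Matrix.cons_val_four, Matrix.vecHead, Matrix.vecTail, Matrix.cons_val_succ,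
          Matrix.cons_val_zero, Function.comp_apply, himg4]
        exact memQ5 z h1.le h4.le hxy⟩
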